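/- Let Λ = ⟨r_1, …, r_{d−1}, r_d^{±1}⟩ be the group-completion-at-r_d of the free monoid on d generators, equipped with the minimal left- and right-invariant partial order generated by r_{a+b} < r_a r_b and 1 < r_a r_d^{-1} r_{d−a} for a,b ≥ 1, a+b ≤ d. Then for every λ ∈ Λ the set {μ ∈ Λ : μ < λ} is finite. -/

import Mathlib

/-- The relations inverting `r_d` in the free monoid on `r_1, …, r_d, r_d⁻¹`.
Generator `⟨a⟩` for `a < d` is `r_{a+1}`, and generator `⟨d⟩` is `r_d⁻¹`. -/
def lamRels (d : ℕ) : FreeMonoid (Fin (d + 1)) → FreeMonoid (Fin (d + 1)) → Prop :=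
  fun x y =>
    (x = FreeMonoid.of ⟨d - 1, by omega⟩ * FreeMonoid.of ⟨d, by omega⟩ ∧ y = 1) ∨
    (x = FreeMonoid.of ⟨d, by omega⟩ * FreeMonoid.of ⟨d - 1, by omega⟩ ∧ y = 1)

/-- The monoid `Λ = ⟨r_1, …, r_{d−1}, r_d^{±1}⟩`, obtained from the free monoid on
`r_1, …, r_d` by inverting `r_d`. -/
abbrev Lam (d : ℕ) := (conGen (lamRels d)).Quotient

/-- The generator `r_a ∈ Λ` for `1 ≤ a ≤ d`, with the convention `r_0 = 1`. -/
def lamGen (d a : ℕ) : Lam d :=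
  if a = 0 then 1
  else if h : a ≤ d then (conGen (lamRels d)).mk' (FreeMonoid.of ⟨a - 1, by omega⟩)
  else 1

/-- The inverse generator `r_d⁻¹ ∈ Λ`. -/
def lamGenInv (d : ℕ) : Lam d := (conGen (lamRels d)).mk' (FreeMonoid.of ⟨d, by omega⟩)

/-- One step of the left- and right-invariant order on `Λ` generated by
`r_{a+b} < r_a r_b` and `1 < r_a r_d⁻¹ r_{d−a}` for `a, b ≥ 1`, `a + b ≤ d`. -/
def lamBaseRel (d : ℕ) : Lam d → Lam d → Prop := fun x y =>
  ∃ w w' : Lam d,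
    (∃ a b : ℕ, 1 ≤ a ∧ 1 ≤ b ∧ a + b ≤ d ∧
      x = w * lamGen d (a + b) * w' ∧ y = w * lamGen d a * lamGen d b * w') ∨
    (∃ a : ℕ, 1 ≤ a ∧ a + 1 ≤ d ∧
      x = w * w' ∧ y = w * lamGen d a * lamGenInv d * lamGen d (d - a) * w')

namespace LamProof

variable {d : ℕ}

/-- `a` followed by `b` is a cancelling pair (`r_d r_d⁻¹` or `r_d⁻¹ r_d`). -/
def canc (d : ℕ) (a b : Fin (d + 1)) : Bool :=
  (a.1 = d - 1 && b.1 = d) || (a.1 = d && b.1 = d - 1)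

/-- Push a letter onto a reduced word, cancelling if possible. -/
def push (d : ℕ) (a : Fin (d + 1)) (r : List (Fin (d + 1))) : List (Fin (d + 1)) :=
  match r with
  | [] => [a]
  | b :: t => if canc d a b then t else a :: b :: t

/-- The normal form of a word. -/
def reduce (d : ℕ) (l : List (Fin (d + 1))) : List (Fin (d + 1)) := l.foldr (push d) []

/-- A word is reduced if it has no adjacent cancelling pair. -/
def Reduced (d : ℕ) (l : List (Fin (d + 1))) : Prop :=
  l.Chain' (fun a b => canc d a b = false)

theorem Reduced.tail' {a : Fin (d+1)} {t : List (Fin (d+1))}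
    (h : Reduced d (a :: t)) : Reduced d t := List.IsChain.tail h

theorem push_nil (a : Fin (d+1)) : push d a [] = [a] := rfl

theorem push_cons_pos {a b : Fin (d+1)} (h : canc d a b = true) (t : List (Fin (d+1))) :
    push d a (b :: t) = t := by simp [push, h]

theorem push_cons_neg {a b : Fin (d+1)} (h : canc d a b = false) (t : List (Fin (d+1))) :
    push d a (b :: t) = a :: b :: t := by simp [push, h]

theorem push_push {a b : Fin (d+1)} (hab : canc d a b = true) {r : List (Fin (d+1))}
    (hr : Reduced d r) : push d a (push d b r) = r := by
  cases r with
  | nil =>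
    rw [push_nil, push_cons_pos hab]
  | cons c t =>
    rcases hbc : canc d b c with hf | ht
    · rw [push_cons_neg hbc, push_cons_pos hab]
    · rw [push_cons_pos hbc]
      have hac : a = c := by
        simp only [canc, Bool.or_eq_true, Bool.and_eq_true, decide_eq_true_eq] at hab hbc
        exact Fin.ext (by omega)
      subst hac
      cases t with
      | nil => rfl
      | cons e t' =>
        have h1 : canc d a e = false := (List.isChain_cons_cons.mp hr).1
        rw [push_cons_neg h1]

theorem reduced_push {a : Fin (d+1)} {r : List (Fin (d+1))} (hr : Reduced d r) :
    Reduced d (push d a r) := by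
  cases r with
  | nil => simp [push_nil, Reduced, List.Chain']
  | cons b t =>
    rcases h : canc d a b with hf | ht
    · rw [push_cons_neg h]
      exact List.isChain_cons_cons.mpr ⟨h, hr⟩
    · rw [push_cons_pos h]
      exact hr.tail'

theorem reduce_nil : reduce d [] = [] := rfl

theorem reduce_cons (a : Fin (d+1)) (l : List (Fin (d+1))) :
    reduce d (a :: l) = push d a (reduce d l) := rfl

theorem reduced_reduce (l : List (Fin (d+1))) : Reduced d (reduce d l) := by
  induction l with
  | nil => simp [reduce_nil, Reduced, List.Chain']
  | cons a l ih => rw [reduce_cons]; exact reduced_push ih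

theorem reduce_eq_self {l : List (Fin (d+1))} (h : Reduced d l) : reduce d l = l := by
  induction l with
  | nil => rfl
  | cons a t ih =>
    rw [reduce_cons, ih h.tail']
    cases t with
    | nil => rfl
    | cons b t' => exact push_cons_neg (List.isChain_cons_cons.mp h).1 t'

theorem reduced_foldr {s : List (Fin (d+1))} (hs : Reduced d s) (l : List (Fin (d+1))) :
    Reduced d (l.foldr (push d) s) := by
  induction l with
  | nil => exact hs
  | cons a l ih => exact reduced_push ih

theorem foldr_push_swap {s : List (Fin (d+1))} (hs : Reduced d s) (c : Fin (d+1))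
    (t : List (Fin (d+1))) :
    (push d c t).foldr (push d) s = push d c (t.foldr (push d) s) := by
  cases t with
  | nil => rfl
  | cons b t' =>
    rcases h : canc d c b with hf | ht
    · rw [push_cons_neg h]
      rfl
    · rw [push_cons_pos h]
      show t'.foldr (push d) s = push d c (push d b (t'.foldr (push d) s))
      rw [push_push h (reduced_foldr hs t')]

theorem foldr_push_reduce {s : List (Fin (d+1))} (hs : Reduced d s) (l : List (Fin (d+1))) :
    l.foldr (push d) s = (reduce d l).foldr (push d) s := by
  induction l with
  | nil => rfl
  | cons c l ih =>
    rw [reduce_cons, foldr_push_swap hs]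
    show push d c (l.foldr (push d) s) = push d c ((reduce d l).foldr (push d) s)
    rw [ih]

theorem reduce_append (u v : List (Fin (d+1))) :
    reduce d (u ++ v) = u.foldr (push d) (reduce d v) := by
  unfold reduce
  rw [List.foldr_append]

theorem length_push_le (a : Fin (d+1)) (r : List (Fin (d+1))) :
    (push d a r).length ≤ r.length + 1 := by
  cases r with
  | nil => simp [push_nil]
  | cons b t =>
    rcases h : canc d a b with hf | ht
    · rw [push_cons_neg h]; simp
    · rw [push_cons_pos h]; simp; omega

theorem length_foldr_le (s l : List (Fin (d+1))) :
    (l.foldr (push d) s).length ≤ s.length + l.length := by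
  induction l with
  | nil => simp
  | cons a l ih =>
    calc (push d a (l.foldr (push d) s)).length ≤ (l.foldr (push d) s).length + 1 :=
          length_push_le _ _
      _ ≤ s.length + l.length + 1 := by omega
      _ = s.length + (a :: l).length := by simp only [List.length_cons]; omega

theorem length_reduce_append_le (u v : List (Fin (d+1))) :
    (reduce d (u ++ v)).length ≤ (reduce d u).length + (reduce d v).length := by
  rw [reduce_append, foldr_push_reduce (reduced_reduce v) u]
  have := length_foldr_le (d := d) (reduce d v) (reduce d u)
  omega

/-- A letter that cancels with nothing. -/
def InertVal (d : ℕ) (c : Fin (d + 1)) : Prop := c.1 ≠ d - 1 ∧ c.1 ≠ d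

theorem canc_inert_left {c : Fin (d+1)} (h : InertVal d c) (x : Fin (d+1)) :
    canc d c x = false := by
  obtain ⟨h1, h2⟩ := h
  simp only [canc, Bool.or_eq_false_iff, Bool.and_eq_false_iff, decide_eq_false_iff_not]
  omega

theorem canc_inert_right {c : Fin (d+1)} (h : InertVal d c) (x : Fin (d+1)) :
    canc d x c = false := by
  obtain ⟨h1, h2⟩ := h
  simp only [canc, Bool.or_eq_false_iff, Bool.and_eq_false_iff, decide_eq_false_iff_not]
  omega

theorem push_inert {c : Fin (d+1)} (h : InertVal d c) (r : List (Fin (d+1))) :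
    push d c r = c :: r := by
  cases r with
  | nil => rfl
  | cons b t => exact push_cons_neg (canc_inert_left h b) t

theorem foldr_barrier {c : Fin (d+1)} (h : InertVal d c) {t : List (Fin (d+1))}
    (ht : Reduced d t) (s : List (Fin (d+1))) :
    t.foldr (push d) (c :: s) = t ++ c :: s := by
  induction t with
  | nil => rfl
  | cons e t' ih =>
    show push d e (t'.foldr (push d) (c :: s)) = e :: (t' ++ c :: s)
    rw [ih ht.tail']
    cases t' with
    | nil => exact push_cons_neg (canc_inert_right h e) s
    | cons f t'' => exact push_cons_neg (List.isChain_cons_cons.mp ht).1 _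

theorem reduce_barrier {c : Fin (d+1)} (h : InertVal d c) (u v : List (Fin (d+1))) :
    reduce d (u ++ c :: v) = reduce d u ++ c :: reduce d v := by
  rw [reduce_append]
  have h1 : reduce d (c :: v) = c :: reduce d v := by
    rw [reduce_cons, push_inert h]
  rw [h1]
  have hred : Reduced d (c :: reduce d v) := by
    cases hv : reduce d v with
    | nil => simp [Reduced, List.Chain']
    | cons b t =>
      refine List.isChain_cons_cons.mpr ⟨canc_inert_left h b, ?_⟩
      rw [← hv]
      exact reduced_reduce v
  rw [foldr_push_reduce hred u, foldr_barrier h (reduced_reduce u) (reduce d v)]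

/-! ### The congruence and the normal form on the quotient -/

theorem reduce_toList (v : FreeMonoid (Fin (d+1))) :
    reduce d (FreeMonoid.toList v) = reduce d v := rfl

theorem reduce_mul (u v : FreeMonoid (Fin (d+1))) :
    reduce d (u * v) = (FreeMonoid.toList u).foldr (push d) (reduce d (FreeMonoid.toList v)) :=
  reduce_append (FreeMonoid.toList u) (FreeMonoid.toList v)

theorem lamRels_to_red (x y : FreeMonoid (Fin (d+1))) (h : lamRels d x y) :
    reduce d x = reduce d y := by
  rcases h with ⟨hx, hy⟩ | ⟨hx, hy⟩ <;> subst hx <;> subst hy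
  · show push d _ (push d _ []) = []
    rw [push_nil, push_cons_pos (by simp [canc])]
  · show push d _ (push d _ []) = []
    rw [push_nil, push_cons_pos (by simp [canc])]

/-- The congruence "same normal form". -/
def redCon (d : ℕ) : Con (FreeMonoid (Fin (d+1))) where
  r x y := reduce d x = reduce d y
  iseqv := ⟨fun _ => rfl, Eq.symm, Eq.trans⟩
  mul' := by
    intro w x y z h1 h2
    have h1' : reduce d (FreeMonoid.toList w) = reduce d (FreeMonoid.toList x) := h1
    have h2' : reduce d (FreeMonoid.toList y) = reduce d (FreeMonoid.toList z) := h2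
    show reduce d (w * y) = reduce d (x * z)
    rw [reduce_mul, reduce_mul,
      foldr_push_reduce (reduced_reduce _) (FreeMonoid.toList w),
      foldr_push_reduce (reduced_reduce _) (FreeMonoid.toList x), h1', h2']

theorem reduce_eq_of_con {x y : FreeMonoid (Fin (d+1))}
    (h : conGen (lamRels d) x y) : reduce d x = reduce d y := by
  have hle : conGen (lamRels d) ≤ redCon d :=
    Con.conGen_le.2 (fun a b hab => lamRels_to_red a b hab)
  exact hle h

theorem con_reduce (l : List (Fin (d+1))) :
    conGen (lamRels d) l (reduce d l) := by
  induction l with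
  | nil => exact (conGen (lamRels d)).refl _
  | cons a l ih =>
    have h1 : conGen (lamRels d) (a :: l) (a :: reduce d l) :=
      (conGen (lamRels d)).mul ((conGen (lamRels d)).refl (FreeMonoid.of a)) ih
    refine h1.trans ?_
    rw [reduce_cons]
    cases hl : reduce d l with
    | nil => exact (conGen (lamRels d)).refl _
    | cons b t =>
      rcases h : canc d a b with hf | ht
      · rw [push_cons_neg h]
        exact (conGen (lamRels d)).refl _
      · rw [push_cons_pos h]
        have hrel : conGen (lamRels d) (FreeMonoid.of a * FreeMonoid.of b) 1 := by
          apply ConGen.Rel.of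
          simp only [canc, Bool.or_eq_true, Bool.and_eq_true, decide_eq_true_eq] at h
          rcases h with ⟨ha, hb⟩ | ⟨ha, hb⟩
          · exact Or.inl ⟨by rw [show (⟨d - 1, by omega⟩ : Fin (d+1)) = a from Fin.ext ha.symm,
              show (⟨d, by omega⟩ : Fin (d+1)) = b from Fin.ext hb.symm], rfl⟩
          · exact Or.inr ⟨by rw [show (⟨d, by omega⟩ : Fin (d+1)) = a from Fin.ext ha.symm,
              show (⟨d - 1, by omega⟩ : Fin (d+1)) = b from Fin.ext hb.symm], rfl⟩
        exact (conGen (lamRels d)).mul hrel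
          ((conGen (lamRels d)).refl (t : FreeMonoid (Fin (d+1))))

/-- Normal form on the quotient. -/
def nf (d : ℕ) : Lam d → List (Fin (d+1)) :=
  Quotient.lift (reduce d) (fun _ _ h => reduce_eq_of_con h)

/-- Weight: length of the normal form. -/
def wt (d : ℕ) (q : Lam d) : ℕ := (nf d q).length

theorem wt_mk (v : FreeMonoid (Fin (d+1))) :
    wt d ((conGen (lamRels d)).mk' v) = (reduce d (FreeMonoid.toList v)).length := rfl

theorem mk_nf (q : Lam d) : (conGen (lamRels d)).mk' (nf d q) = q := by
  induction q using Quotient.ind with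
  | _ w => exact Quotient.sound ((conGen (lamRels d)).symm (con_reduce w))

theorem lamGen_eq {a : ℕ} (ha : 1 ≤ a) (had : a ≤ d) :
    lamGen d a = (conGen (lamRels d)).mk' (FreeMonoid.of ⟨a - 1, by omega⟩) := by
  rw [lamGen, if_neg (by omega), dif_pos had]

theorem of_eq_ofList (c : Fin (d+1)) : FreeMonoid.of c = FreeMonoid.ofList [c] := rfl

theorem mk_ofList_mul (U V : List (Fin (d+1))) :
    (conGen (lamRels d)).mk' (FreeMonoid.ofList U) * (conGen (lamRels d)).mk' (FreeMonoid.ofList V)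
      = (conGen (lamRels d)).mk' (FreeMonoid.ofList (U ++ V)) := by
  rw [FreeMonoid.ofList_append, map_mul]

theorem wt_mk_ofList (U : List (Fin (d+1))) :
    wt d ((conGen (lamRels d)).mk' (FreeMonoid.ofList U)) = (reduce d U).length := rfl

theorem key1 (hd : 1 ≤ d) {a b : ℕ} (ha : 1 ≤ a) (hb : 1 ≤ b) (hab : a + b ≤ d)
    (U U' : List (Fin (d+1))) (p1 : a + b - 1 < d + 1) (p2 : a - 1 < d + 1)
    (p3 : b - 1 < d + 1) :
    (reduce d ((U ++ [⟨a + b - 1, p1⟩]) ++ U')).length <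
      (reduce d (((U ++ [⟨a - 1, p2⟩]) ++ [⟨b - 1, p3⟩]) ++ U')).length := by
  set A₁ : Fin (d+1) := ⟨a - 1, p2⟩
  set A₂ : Fin (d+1) := ⟨b - 1, p3⟩
  set C : Fin (d+1) := ⟨a + b - 1, p1⟩
  have hiA₁ : InertVal d A₁ := ⟨show a - 1 ≠ d - 1 by omega, show a - 1 ≠ d by omega⟩
  have hiA₂ : InertVal d A₂ := ⟨show b - 1 ≠ d - 1 by omega, show b - 1 ≠ d by omega⟩
  have el : ((U ++ [A₁]) ++ [A₂]) ++ U' = U ++ A₁ :: A₂ :: U' := by simp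
  have er : (U ++ [C]) ++ U' = U ++ C :: U' := by simp
  rw [el, er]
  have hy' : reduce d (U ++ A₁ :: A₂ :: U') = reduce d U ++ A₁ :: A₂ :: reduce d U' := by
    rw [reduce_barrier hiA₁, reduce_cons, push_inert hiA₂]
  have hle : (reduce d (U ++ C :: U')).length
      ≤ (reduce d U).length + (reduce d U').length + 1 := by
    have h1 := length_reduce_append_le (d := d) U (C :: U')
    have h2 : (reduce d (C :: U')).length ≤ (reduce d U').length + 1 := by
      rw [reduce_cons]; exact length_push_le _ _
    omega
  rw [hy']
  simp only [List.length_append, List.length_cons]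
  omega

theorem key2 (hd : 1 ≤ d) {a : ℕ} (ha : 1 ≤ a) (had : a + 1 ≤ d)
    (U U' : List (Fin (d+1))) (p1 : a - 1 < d + 1) (p2 : d < d + 1)
    (p3 : d - a - 1 < d + 1) :
    (reduce d (U ++ U')).length <
      (reduce d ((((U ++ [⟨a - 1, p1⟩]) ++ [⟨d, p2⟩]) ++ [⟨d - a - 1, p3⟩]) ++ U')).length := by
  set A₁ : Fin (d+1) := ⟨a - 1, p1⟩
  set I : Fin (d+1) := ⟨d, p2⟩
  set A₂ : Fin (d+1) := ⟨d - a - 1, p3⟩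
  have hiA₁ : InertVal d A₁ := ⟨show a - 1 ≠ d - 1 by omega, show a - 1 ≠ d by omega⟩
  have hiA₂ : InertVal d A₂ :=
    ⟨show d - a - 1 ≠ d - 1 by omega, show d - a - 1 ≠ d by omega⟩
  have el : (((U ++ [A₁]) ++ [I]) ++ [A₂]) ++ U' = U ++ A₁ :: I :: A₂ :: U' := by simp
  rw [el]
  have hy' : reduce d (U ++ A₁ :: I :: A₂ :: U')
      = reduce d U ++ A₁ :: I :: A₂ :: reduce d U' := by
    rw [reduce_barrier hiA₁, reduce_cons, reduce_cons, push_inert hiA₂,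
      push_cons_neg (canc_inert_right hiA₂ I)]
  have hle := length_reduce_append_le (d := d) U U'
  rw [hy']
  simp only [List.length_append, List.length_cons]
  omega

theorem wt_lt_of_base (hd : 1 ≤ d) (x y : Lam d) (h : lamBaseRel d x y) :
    wt d x < wt d y := by
  obtain ⟨w, w', h⟩ := h
  obtain ⟨u, rfl⟩ := (conGen (lamRels d)).mk'_surjective w
  obtain ⟨u', rfl⟩ := (conGen (lamRels d)).mk'_surjective w'
  obtain ⟨U, rfl⟩ := FreeMonoid.ofList.surjective u
  obtain ⟨U', rfl⟩ := FreeMonoid.ofList.surjective u'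
  rcases h with ⟨a, b, ha, hb, hab, hx, hy⟩ | ⟨a, ha, had, hx, hy⟩
  · subst hx; subst hy
    rw [lamGen_eq (by omega) hab, lamGen_eq ha (by omega), lamGen_eq hb (by omega),
      of_eq_ofList, of_eq_ofList, of_eq_ofList, mk_ofList_mul, mk_ofList_mul,
      mk_ofList_mul, mk_ofList_mul, mk_ofList_mul, wt_mk_ofList, wt_mk_ofList]
    exact key1 hd ha hb hab U U' _ _ _
  · subst hx; subst hy
    unfold lamGenInv
    rw [lamGen_eq ha (by omega), lamGen_eq (by omega) (by omega),
      of_eq_ofList, of_eq_ofList, of_eq_ofList, mk_ofList_mul, mk_ofList_mul,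
      mk_ofList_mul, mk_ofList_mul, mk_ofList_mul, wt_mk_ofList, wt_mk_ofList]
    exact key2 hd ha had U U' _ _ _

end LamProof

/-- For every `λ ∈ Λ = ⟨r_1, …, r_{d−1}, r_d^{±1}⟩`, with the minimal left- and
right-invariant partial order generated by `r_{a+b} < r_a r_b` and
`1 < r_a r_d⁻¹ r_{d−a}`, the set `{μ ∈ Λ : μ < λ}` is finite. -/
theorem lam_lower_set_finite (d : ℕ) (hd : 1 ≤ d) (lam : Lam d) :
    {μ : Lam d | Relation.TransGen (lamBaseRel d) μ lam}.Finite := by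
  have hwt : ∀ μ, Relation.TransGen (lamBaseRel d) μ lam →
      LamProof.wt d μ < LamProof.wt d lam := by
    intro μ h
    induction h with
    | single h => exact LamProof.wt_lt_of_base hd _ _ h
    | tail _ h2 ih => exact lt_trans ih (LamProof.wt_lt_of_base hd _ _ h2)
  have hsub : {μ : Lam d | Relation.TransGen (lamBaseRel d) μ lam} ⊆
      (fun w : List (Fin (d+1)) => ((conGen (lamRels d)).mk' w : Lam d)) ''
        {w : List (Fin (d+1)) | w.length < LamProof.wt d lam} := by
    intro μ hμ
    exact ⟨LamProof.nf d μ, hwt μ hμ, LamProof.mk_nf μ⟩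
  exact Set.Finite.subset ((List.finite_length_lt _ _).image _) hsub
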